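/- arXiv:2512.07303 — 2 statements merged into one kernel-verified Lean document; each statement's English description precedes it below -/
import Mathlib

section
/- Let f : E → X be a covering map with E simply connected, and let x ∈ X with a chosen point ẽ ∈ E satisfying f(ẽ) = x. Then there is a bijection between the fiber f⁻¹(x) and the fundamental group π₁(X, x) of X at x, given by sending ẽ′ ∈ f⁻¹(x) to the homotopy class of f ∘ γ̃ for any path γ̃ in E from ẽ to ẽ′. -/
open unitInterval Set Topology

universe u

section Lifting

variable {E X : Type*} [TopologicalSpace E] [TopologicalSpace X] {f : E → X}

/-- Local lifting of a homotopy `H : A × I → X` along a covering map: near every `a : A`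
there is a continuous lift extending a given initial lift at time `0`. -/
lemma IsCoveringMap.exists_local_lift {A : Type*} [TopologicalSpace A]
    (hf : IsCoveringMap f) (H : A × I → X) (hH : Continuous H)
    (g : A → E) (hg : Continuous g) (hg0 : ∀ a, f (g a) = H (a, 0)) (a : A) :
    ∃ N : Set A, IsOpen N ∧ a ∈ N ∧ ∃ G : A × I → E,
      ContinuousOn G (N ×ˢ univ) ∧ (∀ b ∈ N, G (b, 0) = g b) ∧
      ∀ b ∈ N, ∀ s : I, f (G (b, s)) = H (b, s) := by
  classical
  have hne : ∀ s : I, Nonempty (f ⁻¹' {H (a, s)}) := by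
    have hcl : IsClosed (range f) := by
      rw [← isOpen_compl_iff, isOpen_iff_forall_mem_open]
      intro y hy
      obtain ⟨-, U, hyU, hU, -, Φ, -⟩ := hf y
      refine ⟨U, fun z hz ⟨e, he⟩ => ?_, hU, hyU⟩
      have hmem : e ∈ f ⁻¹' U := show f e ∈ U by rw [he]; exact hz
      exact hy ⟨_, (Φ ⟨e, hmem⟩).2.2⟩
    have hclo : IsClopen ((fun u : I => H (a, u)) ⁻¹' range f) :=
      ⟨hcl.preimage (hH.comp (Continuous.prodMk_right a)),
        hf.isOpenMap.isOpen_range.preimage (hH.comp (Continuous.prodMk_right a))⟩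
    have h0 : (0 : I) ∈ (fun u : I => H (a, u)) ⁻¹' range f := ⟨g a, hg0 a⟩
    intro s
    have hs : s ∈ (fun u : I => H (a, u)) ⁻¹' range f := by
      rw [hclo.eq_univ ⟨0, h0⟩]; trivial
    obtain ⟨e, he⟩ := hs
    exact ⟨⟨e, he⟩⟩
  obtain ⟨t, ht0, htmono, ⟨m, htm⟩, hsub⟩ :=
    exists_monotone_Icc_subset_open_cover_unitInterval
      (c := fun s : I => (fun u : I => H (a, u)) ⁻¹' (hf (H (a, s))).toTrivialization.baseSet)
      (fun s => ((hf _).toTrivialization.open_baseSet).preimage (hH.comp (Continuous.prodMk_right a)))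
      (fun u _ => mem_iUnion.mpr ⟨u, (hf (H (a, u))).mem_toTrivialization_baseSet⟩)
  choose i hi using hsub
  suffices h : ∀ n : ℕ, ∃ N : Set A, IsOpen N ∧ a ∈ N ∧ ∃ G : A × I → E,
      ContinuousOn G (N ×ˢ univ) ∧ (∀ b ∈ N, G (b, 0) = g b) ∧
      ∀ b ∈ N, ∀ s : I, f (G (b, s)) = H (b, min s (t n)) by
    obtain ⟨N, hN, haN, G, hGc, hG0, hGf⟩ := h m
    refine ⟨N, hN, haN, G, hGc, hG0, fun b hb s => ?_⟩
    rw [hGf b hb s, htm m le_rfl, min_eq_left le_one']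
  intro n
  induction n with
  | zero =>
    refine ⟨univ, isOpen_univ, mem_univ a, fun p => g p.1,
      (hg.comp continuous_fst).continuousOn, fun b _ => rfl, fun b _ s => ?_⟩
    rw [ht0, min_eq_right nonneg', hg0]
  | succ n ih =>
    obtain ⟨N, hN, haN, G, hGc, hG0, hGf⟩ := ih
    set T := (hf (H (a, i n))).toTrivialization with hT
    have htn : t n ≤ t (n + 1) := htmono (Nat.le_succ n)
    -- tube lemma
    obtain ⟨u, v, hu, hv, hau, hKv, huv⟩ := generalized_tube_lemma isCompact_singleton
      ((isClosed_Icc (a := t n) (b := t (n + 1))).isCompact) (hH.isOpen_preimage _ T.open_baseSet)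
      (by
        rintro ⟨b, s⟩ ⟨hb, hs⟩
        rcases hb with rfl
        exact hi n hs)
    set N' : Set A := N ∩ u with hN'
    have hbase : ∀ b ∈ N', ∀ s ∈ Icc (t n) (t (n + 1)), H (b, s) ∈ T.baseSet :=
      fun b hb s hs => huv (mk_mem_prod hb.2 (hKv hs))
    have htnIcc : t n ∈ Icc (t n) (t (n + 1)) := ⟨le_rfl, htn⟩
    have hfG : ∀ b ∈ N', f (G (b, t n)) = H (b, t n) := by
      intro b hb; rw [hGf b hb.1, min_self]
    have hsrc : ∀ b ∈ N', G (b, t n) ∈ T.source := by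
      intro b hb
      rw [T.mem_source, hfG b hb]
      exact hbase b hb _ htnIcc
    set idx : A → ↥(f ⁻¹' {H (a, i n)}) := fun b => (T (G (b, t n))).2 with hidx
    have hmatch : ∀ b ∈ N', T.toPartialHomeomorph.symm (H (b, t n), idx b) = G (b, t n) := by
      intro b hb
      have h1 : (H (b, t n), idx b) = (f (G (b, t n)), (T (G (b, t n))).2) := by
        rw [hfG b hb]
      rw [h1]
      exact T.symm_apply_mk_proj (hsrc b hb)
    have hminIcc : ∀ s : I, t n ≤ s → min s (t (n + 1)) ∈ Icc (t n) (t (n + 1)) :=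
      fun s hs => ⟨le_min hs htn, min_le_right _ _⟩
    set G' : A × I → E := fun p =>
      if p.2 ≤ t n then G p
      else T.toPartialHomeomorph.symm (H (p.1, min p.2 (t (n + 1))), idx p.1) with hG'
    have hidxc : ContinuousOn idx N' := by
      have h1 : ContinuousOn (fun b => G (b, t n)) N' :=
        hGc.comp ((continuous_id.prodMk continuous_const).continuousOn)
          (fun b hb => mk_mem_prod hb.1 (mem_univ _))
      exact continuous_snd.comp_continuousOn
        (T.continuousOn_toFun.comp h1 fun b hb => hsrc b hb)
    have hGmin : ∀ b ∈ N', ∀ s : I, f (G' (b, s)) = H (b, min s (t (n + 1))) := by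
      intro b hb s
      by_cases hs : s ≤ t n
      · simp only [hG', if_pos hs]
        rw [hGf b hb.1, min_eq_left hs, min_eq_left (hs.trans htn)]
      · simp only [hG', if_neg hs]
        exact T.proj_symm_apply' (hbase b hb _ (hminIcc s (le_of_not_ge hs)))
    refine ⟨N', hN.inter hu, ⟨haN, hau rfl⟩, G', ?_, ?_, hGmin⟩
    · -- continuity
      apply ContinuousOn.if
      · rintro ⟨b, s⟩ ⟨hbs, hfr⟩
        have hb : b ∈ N' := hbs.1
        have h1 : s ≤ t n :=
          (isClosed_le continuous_snd (continuous_const : Continuous fun _ : A × I => t n)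
            ).closure_subset hfr.1
        have h2 : t n ≤ s := by
          by_contra hlt
          have hopen : IsOpen {p : A × I | p.2 < t n} :=
            isOpen_lt continuous_snd continuous_const
          have hsub2 : {p : A × I | p.2 < t n} ⊆ {p : A × I | p.2 ≤ t n} :=
            fun p hp => show p.2 ≤ t n from le_of_lt hp
          exact hfr.2 (interior_maximal hsub2 hopen
            (show ((b, s) : A × I) ∈ {p : A × I | p.2 < t n} from not_le.mp hlt))
        have hst : s = t n := le_antisymm h1 h2
        subst hst
        rw [min_eq_left htn]
        exact (hmatch b hb).symm
      · exact hGc.mono fun p hp => ⟨hp.1.1.1, mem_univ _⟩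
      · -- else branch
        have hSsub : (N' ×ˢ univ) ∩ closure {p : A × I | ¬ p.2 ≤ t n} ⊆
            (N' ×ˢ univ) ∩ {p : A × I | t n ≤ p.2} := by
          refine inter_subset_inter_right _ ?_
          exact (isClosed_le continuous_const continuous_snd).closure_subset_iff.mpr
            fun p hp => le_of_not_ge hp
        refine ContinuousOn.mono ?_ hSsub
        set S := (N' ×ˢ (univ : Set I)) ∩ {p : A × I | t n ≤ p.2} with hS
        have hinner : ContinuousOn
            (fun p : A × I => (H (p.1, min p.2 (t (n + 1))), idx p.1)) S := by
          apply ContinuousOn.prodMk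
          · exact (hH.comp (continuous_fst.prodMk
              (continuous_snd.min continuous_const))).continuousOn
          · exact hidxc.comp continuous_fst.continuousOn fun p hp => hp.1.1
        refine (T.toPartialHomeomorph.continuousOn_symm.comp hinner ?_)
        rintro ⟨b, s⟩ ⟨⟨hb, -⟩, hs⟩
        rw [T.mem_target]
        exact hbase b hb _ (hminIcc s hs)
    · intro b hb
      have h0 : (0 : I) ≤ t n := ht0 ▸ htmono (Nat.zero_le n)
      simp only [hG', if_pos h0]
      exact hG0 b hb.1

/-- Path lifting along a covering map. -/
lemma IsCoveringMap.pathLift (hf : IsCoveringMap f) (γ : I → X) (hγ : Continuous γ)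
    (e₀ : E) (he : f e₀ = γ 0) :
    ∃ Γ : I → E, Continuous Γ ∧ Γ 0 = e₀ ∧ ∀ s, f (Γ s) = γ s := by
  obtain ⟨N, hN, haN, G, hGc, hG0, hGf⟩ := hf.exists_local_lift (A := Unit)
    (fun p => γ p.2) (hγ.comp continuous_snd) (fun _ => e₀) continuous_const (fun _ => he) ()
  have hNuniv : N ×ˢ (univ : Set I) = univ := by
    rw [eq_univ_iff_forall]
    rintro ⟨⟨⟩, s⟩
    exact ⟨haN, mem_univ _⟩
  have hGcont : Continuous G := by
    rw [← continuousOn_univ]; rwa [hNuniv] at hGc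
  exact ⟨fun s => G ((), s), hGcont.comp (continuous_const.prodMk continuous_id),
    hG0 () haN, fun s => hGf () haN s⟩

/-- Monodromy: endpoint lifts of homotopic (rel endpoints) paths agree. -/
lemma IsCoveringMap.monodromy' (hf : IsCoveringMap f) {x y : X} (H : I × I → X)
    (hH : Continuous H) (hH0 : ∀ s, H (s, 0) = x) (hH1 : ∀ s, H (s, 1) = y)
    {ea : E} (hea : f ea = x)
    {Γ₀ Γ₁ : I → E} (hc0 : Continuous Γ₀) (hc1 : Continuous Γ₁)
    (h00 : Γ₀ 0 = ea) (h10 : Γ₁ 0 = ea)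
    (hl0 : ∀ u, f (Γ₀ u) = H (0, u)) (hl1 : ∀ u, f (Γ₁ u) = H (1, u)) :
    Γ₀ 1 = Γ₁ 1 := by
  have key : ∀ s : I, ∃ Γ : I → E, Continuous Γ ∧ Γ 0 = ea ∧ ∀ u, f (Γ u) = H (s, u) :=
    fun s => hf.pathLift (fun u => H (s, u)) (hH.comp (Continuous.prodMk_right s)) ea
      (by show f ea = H (s, 0); rw [hH0 s]; exact hea)
  choose Γ hΓc hΓ0 hΓf using key
  set φ : I → E := fun s => Γ s 1 with hφ
  have hφcont : Continuous φ := by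
    rw [continuous_iff_continuousAt]; intro a
    obtain ⟨N, hN, haN, G, hGc, hG0, hGf⟩ := hf.exists_local_lift H hH
      (fun _ => ea) continuous_const (fun b => by show f ea = H (b, 0); rw [hH0 b]; exact hea) a
    have hslice : ∀ b ∈ N, Γ b = fun u => G (b, u) := by
      intro b hb
      refine hf.eq_of_comp_eq (hΓc b)
        (hGc.comp_continuous (continuous_const.prodMk continuous_id)
          fun u => mk_mem_prod hb (mem_univ u)) ?_ 0 ((hΓ0 b).trans (hG0 b hb).symm)
      funext u
      simp only [Function.comp_apply]
      rw [hΓf b u, hGf b hb u]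
    have hG1 : ContinuousOn (fun s => G (s, 1)) N :=
      hGc.comp ((continuous_id.prodMk continuous_const).continuousOn)
        fun b hb => mk_mem_prod hb (mem_univ _)
    have heq : ∀ b ∈ N, φ b = G (b, 1) := fun b hb => congrFun (hslice b hb) 1
    refine (hG1.continuousAt (hN.mem_nhds haN)).congr ?_
    filter_upwards [hN.mem_nhds haN] with b hb
    exact (heq b hb).symm
  have hconst : φ = fun _ => φ 0 := by
    refine hf.eq_of_comp_eq hφcont continuous_const ?_ 0 rfl
    funext s
    simp only [Function.comp_apply, hφ]
    rw [hΓf s 1, hH1, ← hH1 0, ← hΓf 0 1]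
  have e0 : Γ₀ = Γ 0 :=
    hf.eq_of_comp_eq hc0 (hΓc 0) (funext fun u => by
      simp only [Function.comp_apply]; rw [hl0 u, hΓf 0 u]) 0 (h00.trans (hΓ0 0).symm)
  have e1 : Γ₁ = Γ 1 :=
    hf.eq_of_comp_eq hc1 (hΓc 1) (funext fun u => by
      simp only [Function.comp_apply]; rw [hl1 u, hΓf 1 u]) 0 (h10.trans (hΓ0 1).symm)
  calc Γ₀ 1 = φ 0 := by rw [e0]
    _ = φ 1 := by rw [hconst]
    _ = Γ₁ 1 := by rw [e1]

/-- Casting preserves path homotopy. -/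
lemma Path.Homotopic.cast' {x y x' y' : X} {p q : Path x y}
    (h : p.Homotopic q) (hx : x' = x) (hy : y' = y) :
    (p.cast hx hy).Homotopic (q.cast hx hy) := by
  subst hx; subst hy
  have hp : p.cast rfl rfl = p := by ext u; rfl
  have hq : q.cast rfl rfl = q := by ext u; rfl
  rwa [hp, hq]

end Lifting

attribute [local instance] Path.Homotopic.setoid



/-- For a covering map `f : E → X` with `E` simply connected and a chosen
`ẽ ∈ f⁻¹(x)`, the map sending `e' ∈ f⁻¹(x)` to the homotopy class of `f ∘ γl` for any path
`γl` in `E` from `ẽ` to `e'` is a bijection between the fiber `f⁻¹(x)` and the fundamental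
group `π₁(X, x)`. -/
theorem stmt5 {E X : Type u} [TopologicalSpace E] [TopologicalSpace X]
    (f : E → X) (hf : IsCoveringMap f) (hsurj : Function.Surjective f)
    [SimplyConnectedSpace E]
    (x : X) (ea : E) (hea : f ea = x) :
    ∃ Φ : (f ⁻¹' {x}) → FundamentalGroup X x,
      (∀ (e' : E) (he' : f e' = x) (γl : Path ea e'),
        Φ ⟨e', he'⟩ =
          FundamentalGroup.fromPath (X := TopCat.of X)
            ⟦(γl.map hf.continuous).cast hea.symm he'.symm⟧) ∧
      Function.Bijective Φ := by
  classical
  set sp : ∀ e' : E, Path ea e' := fun e' => (PathConnectedSpace.somePath ea e') with hsp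
  set Φ : (f ⁻¹' {x}) → FundamentalGroup X x := fun q =>
    FundamentalGroup.fromPath (X := TopCat.of X)
      ⟦((sp q.1).map hf.continuous).cast hea.symm (show f q.1 = x from q.2).symm⟧ with hΦdef
  have hprop : ∀ (e' : E) (he' : f e' = x) (γl : Path ea e'),
      Φ ⟨e', he'⟩ = FundamentalGroup.fromPath (X := TopCat.of X)
        ⟦(γl.map hf.continuous).cast hea.symm he'.symm⟧ := by
    intro e' he' γl
    simp only [hΦdef]
    congr 1
    exact Quotient.sound (Path.Homotopic.cast' (Path.Homotopic.map
      (SimplyConnectedSpace.paths_homotopic (sp e') γl) ⟨f, hf.continuous⟩) _ _)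
  refine ⟨Φ, hprop, ?_, ?_⟩
  · -- injective
    rintro ⟨e₁, he₁⟩ ⟨e₂, he₂⟩ hΦeq
    have he₁' : f e₁ = x := he₁
    have he₂' : f e₂ = x := he₂
    set q₁ : Path (x : TopCat.of X) x := ((sp e₁).map hf.continuous).cast hea.symm he₁'.symm
    set q₂ : Path (x : TopCat.of X) x := ((sp e₂).map hf.continuous).cast hea.symm he₂'.symm
    have h1 : (⟦q₁⟧ : Path.Homotopic.Quotient (x : TopCat.of X) x) = ⟦q₂⟧ :=
      hΦeq
    have h2 : q₁.Homotopic q₂ := Quotient.exact h1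
    obtain ⟨F⟩ := h2
    have h01 : (0 : I) ∈ ({0, 1} : Set I) := Set.mem_insert 0 {1}
    have h11 : (1 : I) ∈ ({0, 1} : Set I) := Set.mem_insert_of_mem 0 rfl
    have key : sp e₁ 1 = sp e₂ 1 := by
      refine hf.monodromy' (x := x) (y := x) (fun p => F p) F.continuous
        (fun s => (F.eq_fst s h01).trans q₁.source)
        (fun s => (F.eq_fst s h11).trans q₁.target) hea
        (sp e₁).continuous (sp e₂).continuous (sp e₁).source (sp e₂).source
        (fun u => (F.apply_zero u).symm)
        (fun u => (F.apply_one u).symm)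
    have : e₁ = e₂ := by
      have t1 := (sp e₁).target
      have t2 := (sp e₂).target
      rw [t1, t2] at key
      exact key
    exact Subtype.ext this
  · -- surjective
    intro α
    obtain ⟨γ, hγ⟩ := Quotient.exists_rep (FundamentalGroup.toPath (X := TopCat.of X) α)
    obtain ⟨Γ, hΓc, hΓ0, hΓf⟩ := hf.pathLift γ γ.continuous ea (hea.trans γ.source.symm)
    have he' : f (Γ 1) = x := by rw [hΓf, γ.target]
    refine ⟨⟨Γ 1, he'⟩, ?_⟩
    rw [hprop (Γ 1) he' ⟨⟨Γ, hΓc⟩, hΓ0, rfl⟩]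
    have hpath : (((⟨⟨Γ, hΓc⟩, hΓ0, rfl⟩ : Path ea (Γ 1)).map hf.continuous).cast
        hea.symm he'.symm) = γ := by
      ext u
      exact hΓf u
    rw [hpath, hγ]
end

section
/- Let f : E → X be a covering map with E simply connected and locally path-connected. Then for any x ∈ X and any two points ẽ₁, ẽ₂ ∈ f⁻¹(x), there exists a homeomorphism φ : E → E such that f ∘ φ = f and φ(ẽ₁) = ẽ₂ (i.e., the deck transformation group of a simply connected covering acts transitively on each fiber). -/
open Set Topology Filter


section CoveringLift

variable {E X : Type*} [TopologicalSpace E] [TopologicalSpace X] {f : E → X}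

/-- Gluing two continuous functions along a threshold of a continuous real function. -/
private lemma glue_if_le {β γ : Type*} [TopologicalSpace β] [TopologicalSpace γ]
    {s : Set β} {c : β → ℝ} {t : ℝ} {f' g' : β → γ}
    (hc : Continuous c)
    (hf' : ContinuousOn f' (s ∩ {x | c x ≤ t}))
    (hg' : ContinuousOn g' (s ∩ {x | t ≤ c x}))
    (hfg : ∀ x ∈ s, c x = t → f' x = g' x) :
    ContinuousOn (fun x => if c x ≤ t then f' x else g' x) s := by
  intro x hx
  have hsub : s ⊆ (s ∩ {x | c x ≤ t}) ∪ (s ∩ {x | t ≤ c x}) := fun y hy =>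
    (le_total (c y) t).imp (fun h => ⟨hy, h⟩) (fun h => ⟨hy, h⟩)
  have h1 : ContinuousWithinAt (fun x => if c x ≤ t then f' x else g' x)
      (s ∩ {x | c x ≤ t}) x := by
    rcases le_or_gt (c x) t with hle | hlt
    · exact (hf' x ⟨hx, hle⟩).congr (fun y hy => if_pos hy.2) (if_pos hle)
    · refine continuousWithinAt_of_notMem_closure fun h => absurd
        (closure_minimal inter_subset_right (isClosed_le hc continuous_const) h) ?_
      exact fun h' => absurd h' (not_le.2 hlt)
  have h2 : ContinuousWithinAt (fun x => if c x ≤ t then f' x else g' x)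
      (s ∩ {x | t ≤ c x}) x := by
    rcases lt_or_ge (c x) t with hlt | hle
    · refine continuousWithinAt_of_notMem_closure fun h => absurd
        (closure_minimal inter_subset_right (isClosed_le continuous_const hc) h) ?_
      exact fun h' => absurd h' (not_le.2 hlt)
    · refine (hg' x ⟨hx, hle⟩).congr (fun y hy => ?_) ?_
      · by_cases h' : c y ≤ t
        · rw [if_pos h', hfg y hy.1 (le_antisymm h' hy.2)]
        · rw [if_neg h']
      · by_cases h' : c x ≤ t
        · rw [if_pos h', hfg x hx (le_antisymm h' hle)]
        · rw [if_neg h']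
  exact (h1.union h2).mono hsub

private lemma sec_cont {F : Type*} [TopologicalSpace F] (T : Bundle.Trivialization F f) (i : F) :
    ContinuousOn (fun y => T.toOpenPartialHomeomorph.symm (y, i)) T.baseSet := by
  refine T.toOpenPartialHomeomorph.continuousOn_symm.comp
    (Continuous.continuousOn (by continuity)) fun y hy => ?_
  rw [T.target_eq]
  exact ⟨hy, mem_univ _⟩

private lemma sec_proj {F : Type*} [TopologicalSpace F] (T : Bundle.Trivialization F f) (i : F)
    {y : X} (hy : y ∈ T.baseSet) : f (T.toOpenPartialHomeomorph.symm (y, i)) = y :=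
  T.proj_symm_apply (T.mem_target.2 hy)

private lemma sec_self {F : Type*} [TopologicalSpace F] (T : Bundle.Trivialization F f) {i : F}
    {a : E} (ha : a ∈ T.source) (hi : (T a).2 = i) :
    T.toOpenPartialHomeomorph.symm (f a, i) = a := by
  have h1 : (f a, i) = T a := Prod.ext (T.coe_fst ha).symm hi.symm
  rw [h1, ← T.coe_coe, T.toOpenPartialHomeomorph.left_inv ha]

/-- Lifting over `J ×ˢ [0,1]` for some open `J ∋ s₀`, bottom edge constant. -/
private lemma sq_lift (hf : IsCoveringMap f) (H : ℝ × ℝ → X) (Hc : Continuous H)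
    (e : E) (he : ∀ s, H (s, 0) = f e) (s₀ : ℝ) :
    ∃ J : Set ℝ, IsOpen J ∧ s₀ ∈ J ∧ ∃ G : ℝ × ℝ → E,
      ContinuousOn G (J ×ˢ Icc 0 1) ∧ (∀ s ∈ J, G (s, 0) = e) ∧
      ∀ p ∈ J ×ˢ Icc (0:ℝ) 1, f (G p) = H p := by
  set Q : ℝ → Prop := fun t => ∃ J : Set ℝ, IsOpen J ∧ s₀ ∈ J ∧ ∃ G : ℝ × ℝ → E,
      ContinuousOn G (J ×ˢ Icc 0 t) ∧ (∀ s ∈ J, G (s, 0) = e) ∧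
      ∀ p ∈ J ×ˢ Icc (0:ℝ) t, f (G p) = H p with hQdef
  set S : Set ℝ := {t | t ∈ Icc (0:ℝ) 1 ∧ Q t} with hSdef
  have hQ0 : Q 0 := by
    refine ⟨univ, isOpen_univ, mem_univ _, fun _ => e, continuousOn_const,
      fun _ _ => rfl, fun p hp => ?_⟩
    have h2 : p.2 = 0 := le_antisymm hp.2.2 hp.2.1
    rw [show p = (p.1, 0) from Prod.ext rfl h2, he]
  have hS0 : (0:ℝ) ∈ S := ⟨⟨le_refl _, zero_le_one⟩, hQ0⟩
  have hSne : S.Nonempty := ⟨0, hS0⟩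
  have hSbdd : BddAbove S := ⟨1, fun t ht => ht.1.2⟩
  set c := sSup S with hcdef
  have hc0 : 0 ≤ c := le_csSup hSbdd hS0
  have hc1 : c ≤ 1 := csSup_le hSne fun t ht => ht.1.2
  set x₀ := H (s₀, c) with hx₀
  haveI hd : DiscreteTopology (f ⁻¹' {x₀}) := (hf x₀).1
  haveI : Nonempty (f ⁻¹' {x₀}) := by
    obtain ⟨-, U, hxU, hUo, -, Φ, -⟩ := hf x₀
    obtain ⟨J₁, V₁, -, hV₁o, hs₀J₁, hcV₁, hJVsub₁⟩ :=
      isOpen_prod_iff.1 (hUo.preimage Hc) s₀ c hxU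
    obtain ⟨δ₁, hδ₁, hball₁⟩ := Metric.isOpen_iff.1 hV₁o c hcV₁
    obtain ⟨t₁, ht₁S, ht₁lt⟩ := exists_lt_of_lt_csSup hSne (by linarith : c - δ₁ < c)
    have ht₁c : t₁ ≤ c := le_csSup hSbdd ht₁S
    obtain ⟨ht₁01, J₂, -, hJ₂s₀, G₂, -, -, hG₂l⟩ := ht₁S
    have hmem : G₂ (s₀, t₁) ∈ f ⁻¹' U := by
      show f _ ∈ U
      rw [hG₂l (s₀, t₁) ⟨hJ₂s₀, ht₁01.1, le_refl _⟩]
      refine hJVsub₁ ⟨hs₀J₁, hball₁ ?_⟩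
      rw [Metric.mem_ball, Real.dist_eq, abs_lt]
      constructor <;> linarith
    exact ⟨(Φ ⟨_, hmem⟩).2⟩
  set T : Bundle.Trivialization (f ⁻¹' {x₀}) f := (hf x₀).toTrivialization with hT
  have hbase : x₀ ∈ T.baseSet := IsEvenlyCovered.mem_toTrivialization_baseSet _
  -- a product neighborhood of (s₀, c) mapped into the base set
  obtain ⟨J₀, V, hJ₀o, hVo, hs₀J₀, hcV, hJVsub⟩ :=
    isOpen_prod_iff.1 (T.open_baseSet.preimage Hc) s₀ c hbase
  obtain ⟨δ, hδ, hball⟩ := Metric.isOpen_iff.1 hVo c hcV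
  rw [Real.ball_eq_Ioo] at hball
  -- pick t ∈ S with c - δ < t ≤ c
  obtain ⟨t, htS, htlt⟩ := exists_lt_of_lt_csSup hSne (by linarith : c - δ < c)
  have htc : t ≤ c := le_csSup hSbdd htS
  obtain ⟨ht01, J, hJo, hJs₀, G, hGc, hG0, hGl⟩ := htS
  have htIoo : t ∈ Ioo (c - δ) (c + δ) := ⟨htlt, by linarith⟩
  -- the new upper bound
  set t' := min 1 (c + δ/2) with ht'def
  have htt' : t ≤ t' := le_min ht01.2 (by linarith)
  have ht'1 : t' ≤ 1 := min_le_left _ _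
  have ht'0 : 0 ≤ t' := le_min zero_le_one (by linarith)
  have ht'δ : t' < c + δ := lt_of_le_of_lt (min_le_right _ _) (by linarith)
  -- base set membership for points in J₀ × [t, t']
  have hmemB : ∀ p : ℝ × ℝ, p.1 ∈ J₀ → t ≤ p.2 → p.2 ≤ t' → H p ∈ T.baseSet := by
    intro p hp1 hp2 hp3
    exact hJVsub ⟨hp1, hball ⟨lt_of_lt_of_le htlt hp2, lt_of_le_of_lt hp3 ht'δ⟩⟩
  -- the sheet of G (·, t) is locally constant near s₀
  have hsrc : ∀ s ∈ J ∩ J₀, G (s, t) ∈ T.source := by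
    intro s hs
    rw [T.mem_source, hGl (s, t) ⟨hs.1, ht01.1, le_refl t⟩]
    exact hmemB (s, t) hs.2 (le_refl t) htt'
  have hrowc : ContinuousOn (fun s => G (s, t)) J := by
    refine hGc.comp (Continuous.continuousOn (continuous_id.prodMk continuous_const)) fun s hs => ?_
    exact ⟨hs, ht01.1, le_refl t⟩
  have hσc : ContinuousOn (fun s => (T (G (s, t))).2) (J ∩ J₀) := by
    refine continuous_snd.comp_continuousOn ?_
    have := T.toOpenPartialHomeomorph.continuousOn
    rw [T.coe_coe] at this
    exact this.comp (hrowc.mono inter_subset_left) hsrc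
  set i := (T (G (s₀, t))).2 with hi
  have hσ0 : (fun s => (T (G (s, t))).2) s₀ = i := rfl
  have hσnhds : {s | (T (G (s, t))).2 = i} ∈ nhds s₀ := by
    have hca : ContinuousAt (fun s => (T (G (s, t))).2) s₀ :=
      hσc.continuousAt ((hJo.inter hJ₀o).mem_nhds ⟨hJs₀, hs₀J₀⟩)
    have hmem : {j : f ⁻¹' {x₀} | j = i} ∈ nhds ((fun s => (T (G (s, t))).2) s₀) := by
      simp only [setOf_eq_eq_singleton]
      exact (isOpen_discrete _).mem_nhds rfl
    exact hca.preimage_mem_nhds hmem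
  obtain ⟨O, hOsub, hOo, hs₀O⟩ := mem_nhds_iff.1 hσnhds
  set J' := O ∩ (J ∩ J₀) with hJ'def
  have hJ'o : IsOpen J' := hOo.inter (hJo.inter hJ₀o)
  have hs₀J' : s₀ ∈ J' := ⟨hs₀O, hJs₀, hs₀J₀⟩
  have hJ'J : J' ⊆ J := fun s hs => hs.2.1
  have hJ'J₀ : J' ⊆ J₀ := fun s hs => hs.2.2
  have hJ'i : ∀ s ∈ J', (T (G (s, t))).2 = i := fun s hs => hOsub hs.1
  -- extended lift
  set G' : ℝ × ℝ → E := fun p => if p.2 ≤ t then G p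
    else T.toOpenPartialHomeomorph.symm (H p, i) with hG'def
  have hQt' : Q t' := by
    refine ⟨J', hJ'o, hs₀J', G', ?_, ?_, ?_⟩
    · refine glue_if_le continuous_snd ?_ ?_ ?_
      · refine hGc.mono fun p hp => ?_
        exact ⟨hJ'J hp.1.1, hp.1.2.1, hp.2⟩
      · refine ((sec_cont T i).comp Hc.continuousOn fun p hp => ?_)
        exact hmemB p (hJ'J₀ hp.1.1) hp.2 hp.1.2.2
      · rintro ⟨s, u⟩ hp (hu : u = t)
        subst hu
        have h1 : f (G (s, u)) = H (s, u) := hGl (s, u) ⟨hJ'J hp.1, ht01.1, le_refl u⟩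
        rw [← h1]
        exact (sec_self T (hsrc s ⟨hJ'J hp.1, hJ'J₀ hp.1⟩) (hJ'i s hp.1)).symm
    · intro s hs
      have : (0:ℝ) ≤ t := ht01.1
      simp only [hG'def, this, if_pos]
      exact hG0 s (hJ'J hs)
    · rintro ⟨s, u⟩ hp
      by_cases hu : u ≤ t
      · simp only [hG'def, if_pos hu]
        exact hGl (s, u) ⟨hJ'J hp.1, hp.2.1, hu⟩
      · simp only [hG'def, if_neg hu]
        exact sec_proj T i (hmemB (s, u) (hJ'J₀ hp.1) (le_of_lt (not_le.1 hu)) hp.2.2)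
  have hceq : c = 1 := by
    by_contra hne
    have hclt : c < 1 := lt_of_le_of_ne hc1 hne
    have : t' ≤ c := le_csSup hSbdd ⟨⟨ht'0, ht'1⟩, hQt'⟩
    have : c < t' := lt_min hclt (by linarith)
    linarith
  have ht'eq : t' = 1 := by rw [ht'def, hceq]; exact min_eq_left (by linarith)
  rw [ht'eq] at hQt'
  exact hQt'

/-- Uniqueness of path lifts. -/
private lemma lift_unique (hf : IsCoveringMap f) {g₁ g₂ : ℝ → E}
    (h₁ : ContinuousOn g₁ (Icc 0 1)) (h₂ : ContinuousOn g₂ (Icc 0 1))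
    (heq : ∀ u ∈ Icc (0:ℝ) 1, f (g₁ u) = f (g₂ u)) (h0 : g₁ 0 = g₂ 0) :
    ∀ u ∈ Icc (0:ℝ) 1, g₁ u = g₂ u :=
  hf.eqOn_of_comp_eqOn isPreconnected_Icc h₁ h₂ (fun u hu => heq u hu)
    (⟨le_refl _, zero_le_one⟩ : (0:ℝ) ∈ Icc (0:ℝ) 1) h0

/-- Path lifting. -/
private lemma exists_path_lift (hf : IsCoveringMap f) {γ : ℝ → X} (hγ : Continuous γ)
    (e : E) (he : γ 0 = f e) :
    ∃ g : ℝ → E, ContinuousOn g (Icc 0 1) ∧ g 0 = e ∧ ∀ u ∈ Icc (0:ℝ) 1, f (g u) = γ u := by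
  obtain ⟨J, hJo, hJ0, G, hGc, hG0, hGl⟩ :=
    sq_lift hf (fun p => γ p.2) (hγ.comp continuous_snd) e (fun _ => he) 0
  refine ⟨fun u => G (0, u), ?_, hG0 0 hJ0, fun u hu => hGl (0, u) ⟨hJ0, hu⟩⟩
  exact hGc.comp (Continuous.continuousOn (continuous_const.prodMk continuous_id))
    fun u hu => ⟨hJ0, hu⟩

/-- Monodromy: lifts of the two end-columns of a homotopy fixing the bottom edge
and with constant top edge have the same endpoint. -/
private lemma monodromy (hf : IsCoveringMap f) (H : ℝ × ℝ → X) (Hc : Continuous H)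
    (e : E) (he : ∀ s, H (s, 0) = f e) (htop : ∀ s, H (s, 1) = H (0, 1))
    {g₀ g₁ : ℝ → E}
    (hc₀ : ContinuousOn g₀ (Icc 0 1)) (h00 : g₀ 0 = e)
    (hl₀ : ∀ u ∈ Icc (0:ℝ) 1, f (g₀ u) = H (0, u))
    (hc₁ : ContinuousOn g₁ (Icc 0 1)) (h10 : g₁ 0 = e)
    (hl₁ : ∀ u ∈ Icc (0:ℝ) 1, f (g₁ u) = H (1, u)) :
    g₀ 1 = g₁ 1 := by
  choose J hJo hJm G hGc hG0 hGl using sq_lift hf H Hc e he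
  have hcol : ∀ s : ℝ, ContinuousOn (fun u => G s (s, u)) (Icc 0 1) := fun s =>
    (hGc s).comp (Continuous.continuousOn (continuous_const.prodMk continuous_id))
      fun u hu => ⟨hJm s, hu⟩
  have hcol' : ∀ s' s : ℝ, s ∈ J s' → ContinuousOn (fun u => G s' (s, u)) (Icc 0 1) :=
    fun s' s hs => (hGc s').comp
      (Continuous.continuousOn (continuous_const.prodMk continuous_id)) fun u hu => ⟨hs, hu⟩
  -- any two column lifts agree
  have key : ∀ s' s : ℝ, s ∈ J s' → ∀ u ∈ Icc (0:ℝ) 1, G s (s, u) = G s' (s, u) := by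
    intro s' s hs
    exact lift_unique hf (hcol s) (hcol' s' s hs)
      (fun u hu => by rw [hGl s (s, u) ⟨hJm s, hu⟩, hGl s' (s, u) ⟨hs, hu⟩])
      (by rw [hG0 s s (hJm s), hG0 s' s hs])
  set κ : ℝ → E := fun s => G s (s, 1) with hκ
  have h01 : (1:ℝ) ∈ Icc (0:ℝ) 1 := ⟨zero_le_one, le_refl _⟩
  have hκc : ContinuousOn κ (Icc 0 1) := by
    intro s hs
    have hev : ∀ᶠ u in nhds s, κ u = G s (u, 1) := by
      filter_upwards [(hJo s).mem_nhds (hJm s)] with u hu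
      exact key s u hu 1 h01
    have hbase : ContinuousWithinAt (fun u => G s (u, 1)) (Icc 0 1) s := by
      refine ContinuousWithinAt.mono_of_mem_nhdsWithin ?_
        (mem_nhdsWithin_of_mem_nhds ((hJo s).mem_nhds (hJm s)))
      refine ContinuousOn.continuousWithinAt ?_ (hJm s)
      exact (hGc s).comp
        (Continuous.continuousOn (continuous_id.prodMk continuous_const))
        fun u hu => ⟨hu, h01⟩
    exact hbase.congr_of_eventuallyEq (hev.filter_mono nhdsWithin_le_nhds) rfl
  have hκconst : κ 0 = κ 1 := by
    refine hf.constOn_of_comp isPreconnected_Icc hκc ?_ ⟨le_refl _, zero_le_one⟩ h01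
    intro a ha a' ha'
    rw [hκ]
    simp only
    rw [hGl a (a, 1) ⟨hJm a, h01⟩, hGl a' (a', 1) ⟨hJm a', h01⟩, htop a, htop a']
  have e₀ : g₀ 1 = κ 0 := by
    refine lift_unique hf hc₀ (hcol 0)
      (fun u hu => by rw [hl₀ u hu, hGl 0 (0, u) ⟨hJm 0, hu⟩]) ?_ 1 h01
    rw [h00, hG0 0 0 (hJm 0)]
  have e₁ : g₁ 1 = κ 1 := by
    refine lift_unique hf hc₁ (hcol 1)
      (fun u hu => by rw [hl₁ u hu, hGl 1 (1, u) ⟨hJm 1, hu⟩]) ?_ 1 h01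
    rw [h10, hG0 1 1 (hJm 1)]
  rw [e₀, e₁, hκconst]
private lemma key (hf : IsCoveringMap f) [SimplyConnectedSpace E] [LocallyPathConnectedSpace E]
    (e₁ e₂ : E) (h : f e₁ = f e₂) :
    ∃ φ : E → E, Continuous φ ∧ (∀ q, f (φ q) = f q) ∧ φ e₁ = e₂ := by
  have hfc : Continuous f := hf.continuous
  have h01 : (1:ℝ) ∈ Icc (0:ℝ) 1 := ⟨zero_le_one, le_refl _⟩
  have h00 : (0:ℝ) ∈ Icc (0:ℝ) 1 := ⟨le_refl _, zero_le_one⟩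
  have hex : ∀ q : E, ∃ g : ℝ → E, ContinuousOn g (Icc 0 1) ∧ g 0 = e₂ ∧
      ∀ u ∈ Icc (0:ℝ) 1, f (g u) = f ((PathConnectedSpace.somePath e₁ q).extend u) := by
    intro q
    refine exists_path_lift hf (hfc.comp (Path.continuous_extend _)) e₂ ?_
    show f ((PathConnectedSpace.somePath e₁ q).extend 0) = f e₂
    rw [Path.extend_zero]; exact h
  choose g hgc hg0 hgl using hex
  set φ : E → E := fun q => g q 1 with hφ
  have hfφ : ∀ q, f (φ q) = f q := by
    intro q
    have := hgl q 1 h01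
    rwa [Path.extend_one] at this
  -- well-definedness of the endpoint
  have hwd : ∀ (q : E) (p : Path e₁ q) (g' : ℝ → E), ContinuousOn g' (Icc 0 1) →
      g' 0 = e₂ → (∀ u ∈ Icc (0:ℝ) 1, f (g' u) = f (p.extend u)) → g' 1 = φ q := by
    intro q p g' hg'c hg'0 hg'l
    obtain ⟨Hty⟩ := SimplyConnectedSpace.paths_homotopic (PathConnectedSpace.somePath e₁ q) p
    set pr : ℝ → unitInterval := fun u => Set.projIcc 0 1 zero_le_one u with hpr
    have hpr0 : pr 0 = 0 := by
      simp only [hpr, Set.projIcc_left]; rfl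
    have hpr1 : pr 1 = 1 := by
      simp only [hpr, Set.projIcc_right]; rfl
    have hprm : ∀ u ∈ Icc (0:ℝ) 1, (pr u : ℝ) = u := fun u hu => by
      simp only [hpr, Set.projIcc_of_mem zero_le_one hu]
    set Hr : ℝ × ℝ → X := fun z => f (Hty (pr z.1, pr z.2)) with hHr
    have hHrc : Continuous Hr := hfc.comp (Hty.continuous.comp
      ((continuous_projIcc.comp continuous_fst).prodMk
        (continuous_projIcc.comp continuous_snd)))
    have h0S : (0 : unitInterval) ∈ ({0, 1} : Set unitInterval) := by left; rfl
    have h1S : (1 : unitInterval) ∈ ({0, 1} : Set unitInterval) := by right; rfl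
    have hbot : ∀ s : ℝ, Hr (s, 0) = f e₂ := by
      intro s
      show f (Hty (pr s, pr 0)) = f e₂
      rw [hpr0, Hty.eq_fst (pr s) h0S]
      show f ((PathConnectedSpace.somePath e₁ q) 0) = f e₂
      rw [Path.source, h]
    have htop : ∀ s : ℝ, Hr (s, 1) = Hr (0, 1) := by
      intro s
      show f (Hty (pr s, pr 1)) = f (Hty (pr 0, pr 1))
      rw [hpr1, Hty.eq_fst (pr s) h1S, Hty.eq_fst (pr 0) h1S]
    have hcol0 : ∀ u ∈ Icc (0:ℝ) 1, f (g q u) = Hr (0, u) := by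
      intro u hu
      show f (g q u) = f (Hty (pr 0, pr u))
      rw [hpr0]
      have h1 : Hty ((0 : unitInterval), pr u) =
          (PathConnectedSpace.somePath e₁ q) (pr u) := Hty.apply_zero _
      rw [h1, ← Path.extend_extends' _ (pr u)]
      have h2 : ((pr u : ℝ)) = u := hprm u hu
      rw [show ((pr u : Icc (0:ℝ) 1) : ℝ) = u from h2]
      exact hgl q u hu
    have hcol1 : ∀ u ∈ Icc (0:ℝ) 1, f (g' u) = Hr (1, u) := by
      intro u hu
      show f (g' u) = f (Hty (pr 1, pr u))
      rw [hpr1]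
      have h1 : Hty ((1 : unitInterval), pr u) = p (pr u) := Hty.apply_one _
      rw [h1, ← Path.extend_extends' _ (pr u)]
      have h2 : ((pr u : Icc (0:ℝ) 1) : ℝ) = u := hprm u hu
      rw [show ((pr u : Icc (0:ℝ) 1) : ℝ) = u from h2]
      exact hg'l u hu
    exact (monodromy hf Hr hHrc e₂ hbot htop (hgc q) (hg0 q) hcol0 hg'c hg'0 hcol1).symm
  have hφe₁ : φ e₁ = e₂ := by
    have := hwd e₁ (Path.refl e₁) (fun _ => e₂) continuousOn_const rfl
      (fun u hu => by rw [Path.refl_extend]; exact h.symm)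
    exact this.symm
  refine ⟨φ, ?_, hfφ, hφe₁⟩
  rw [continuous_iff_continuousAt]
  intro q₀
  haveI : DiscreteTopology (f ⁻¹' {f q₀}) := (hf (f q₀)).1
  haveI : Nonempty (f ⁻¹' {f q₀}) := ⟨⟨q₀, rfl⟩⟩
  set T := (hf (f q₀)).toTrivialization with hT
  have hbase : f q₀ ∈ T.baseSet := IsEvenlyCovered.mem_toTrivialization_baseSet _
  have hφsrc : φ q₀ ∈ T.source := T.mem_source.2 (by rw [hfφ q₀]; exact hbase)
  set i := (T (φ q₀)).2 with hi
  set sec : X → E := fun y => T.toOpenPartialHomeomorph.symm (y, i) with hsec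
  obtain ⟨W, ⟨hWn, hWc⟩, hWsub⟩ := (path_connected_basis q₀).mem_iff.1
    ((T.open_baseSet.preimage hfc).mem_nhds (show q₀ ∈ f ⁻¹' T.baseSet from hbase))
  have hq₀W : q₀ ∈ W := mem_of_mem_nhds hWn
  have hsecq₀ : sec (f q₀) = φ q₀ := by
    have := sec_self T hφsrc rfl
    rwa [hfφ q₀] at this
  have hkey : ∀ q ∈ W, φ q = sec (f q) := by
    intro q hq
    have hη := hWc.joinedIn q₀ hq₀W q hq
    set η' : Path q₀ q := hη.somePath with hη'
    have hη'W : ∀ u : unitInterval, η' u ∈ W := hη.somePath_mem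
    have hηbase : ∀ u : ℝ, f (η'.extend u) ∈ T.baseSet := by
      intro u
      have h1 : η'.extend u = η' (Set.projIcc 0 1 zero_le_one u) := rfl
      rw [h1]
      exact hWsub (hη'W _)
    set p : Path e₁ q := (PathConnectedSpace.somePath e₁ q₀).trans η' with hp
    set g' : ℝ → E := fun u => if u ≤ (1/2:ℝ) then g q₀ (2*u)
      else sec (f (η'.extend (2*u - 1))) with hg'
    have hg'c : ContinuousOn g' (Icc 0 1) := by
      refine glue_if_le continuous_id ?_ ?_ ?_
      · refine (hgc q₀).comp
          (Continuous.continuousOn (continuous_const.mul continuous_id)) fun u hu => ?_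
        have := hu.1.1; have := hu.2
        constructor <;> simp only [mem_setOf_eq] at * <;> linarith
      · refine (sec_cont T i).comp
          (Continuous.continuousOn (hfc.comp (η'.continuous_extend.comp
            (by fun_prop)))) fun u hu => hηbase _
      · intro u hu h2
        rw [h2, show (2:ℝ) * (1/2) = 1 from by norm_num,
          show (1:ℝ) - 1 = 0 from by norm_num, Path.extend_zero]
        exact hsecq₀.symm
    have hg'0 : g' 0 = e₂ := by
      have : (0:ℝ) ≤ 1/2 := by norm_num
      simp only [hg', if_pos this, mul_zero, hg0 q₀]
    have hg'l : ∀ u ∈ Icc (0:ℝ) 1, f (g' u) = f (p.extend u) := by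
      intro u hu
      have hpe : p.extend u = p ⟨u, hu⟩ := Path.extend_apply p hu
      rw [hpe, hp, Path.trans_apply]
      by_cases hle : u ≤ (1/2:ℝ)
      · rw [dif_pos hle]
        simp only [hg', if_pos hle]
        have h2u : 2*u ∈ Icc (0:ℝ) 1 := ⟨by linarith [hu.1], by linarith⟩
        rw [hgl q₀ (2*u) h2u, Path.extend_apply _ h2u]
      · rw [dif_neg hle]
        simp only [hg', if_neg hle]
        have h2u : 2*u - 1 ∈ Icc (0:ℝ) 1 := ⟨by push_neg at hle; linarith, by linarith [hu.2]⟩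
        rw [sec_proj T i (hηbase _), Path.extend_apply _ h2u]
    have hend := hwd q p g' hg'c hg'0 hg'l
    rw [← hend, hg']
    have hn : ¬ ((1:ℝ) ≤ 1/2) := by norm_num
    simp only [if_neg hn]
    rw [show (2:ℝ) * 1 - 1 = 1 from by norm_num, Path.extend_one]
  have hev : φ =ᶠ[nhds q₀] fun q => sec (f q) := by
    filter_upwards [hWn] with q hq using hkey q hq
  have hsc : ContinuousAt (fun q => sec (f q)) q₀ := by
    have h1 : ContinuousAt (T.toOpenPartialHomeomorph.symm) (f q₀, i) := by
      refine T.toOpenPartialHomeomorph.symm.continuousAt ?_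
      rw [OpenPartialHomeomorph.symm_source]
      exact T.mem_target.2 hbase
    have h2 : ContinuousAt (fun q : E => ((f q, i) : X × (f ⁻¹' {f q₀}))) q₀ :=
      (hfc.prodMk continuous_const).continuousAt
    exact ContinuousAt.comp h1 h2
  exact hsc.congr hev.symm

end CoveringLift

/-- For a covering map `f : E → X` with `E` simply connected and locally
path-connected, for any `x ∈ X` and any two points `e₁, e₂` in the fiber `f⁻¹(x)` there is
a deck transformation (a homeomorphism `φ : E → E` with `f ∘ φ = f`) taking `e₁` to `e₂`. -/
theorem stmt7 {E X : Type*} [TopologicalSpace E] [TopologicalSpace X]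
    (f : E → X) (hf : IsCoveringMap f) (hsurj : Function.Surjective f)
    [SimplyConnectedSpace E] [LocallyPathConnectedSpace E]
    (x : X) (e₁ e₂ : E) (h₁ : f e₁ = x) (h₂ : f e₂ = x) :
    ∃ φ : E ≃ₜ E, f ∘ φ = f ∧ φ e₁ = e₂ := by
  obtain ⟨φ, hφc, hφf, hφ₁⟩ := key hf e₁ e₂ (h₁.trans h₂.symm)
  obtain ⟨ψ, hψc, hψf, hψ₂⟩ := key hf e₂ e₁ (h₂.trans h₁.symm)
  haveI : ConnectedSpace E := pathConnectedSpace_iff_connectedSpace.mp inferInstance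
  have hψφ : ψ ∘ φ = id := by
    refine hf.eq_of_comp_eq (hψc.comp hφc) continuous_id ?_ e₁ ?_
    · funext q
      simp only [Function.comp_apply, id_eq, hψf, hφf]
    · simp only [Function.comp_apply, id_eq, hφ₁, hψ₂]
  have hφψ : φ ∘ ψ = id := by
    refine hf.eq_of_comp_eq (hφc.comp hψc) continuous_id ?_ e₂ ?_
    · funext q
      simp only [Function.comp_apply, id_eq, hφf, hψf]
    · simp only [Function.comp_apply, id_eq, hψ₂, hφ₁]
  refine ⟨⟨⟨φ, ψ, fun q => congrFun hψφ q, fun q => congrFun hφψ q⟩, hφc, hψc⟩,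
    funext fun q => hφf q, hφ₁⟩
end
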